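/- arXiv:2210.05340 — 2 statements merged into one kernel-verified Lean document; each statement's English description precedes it below -/
import Mathlib

section
/- Under the stated hypotheses (joint independence, zero means, E[|X_n|²] = E[|Y_n|²] = 1 for all n, and E[X_n²] = ψ for all n ∈ W), the total Case II contribution satisfies Σ_{l ∈ W} Σ_{m ∈ W} E[ ( conj(s)·X_l + conj(Y_0)·Y_l )·X_m ]·S(0,l,m) + Σ_{k ∈ W} Σ_{m ∈ W} E[ ( conj(X_k)·s + conj(Y_k)·Y_0 )·X_m ]·S(k,0,m) + Σ_{k ∈ W} Σ_{l ∈ W} E[ ( conj(X_k)·X_l + conj(Y_k)·Y_l )·s ]·S(k,l,0) = Σ_{k ∈ W} [ s·( 2·S(k,k,0) + S(k,0,k) ) + conj(s)·ψ·S(0,k,k) ]. -/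
open MeasureTheory ProbabilityTheory Filter

lemma aux_iIndepFun_ae_eq {Ω ι : Type*} [MeasurableSpace Ω] {μ : Measure Ω}
    {f g : ι → Ω → ℂ} (hf : iIndepFun f μ)
    (h : ∀ i, f i =ᵐ[μ] g i) : iIndepFun g μ := by
  rw [iIndepFun_iff_measure_inter_preimage_eq_mul] at hf ⊢
  intro S sets H
  have h1 : ∀ i : ι, (f i ⁻¹' sets i : Set Ω) =ᵐ[μ] g i ⁻¹' sets i :=
    fun i => (h i).fun_comp (sets i)
  have h2 : (⋂ i ∈ S, g i ⁻¹' sets i) =ᵐ[μ] (⋂ i ∈ S, f i ⁻¹' sets i) := by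
    have := S.countable_toSet.to_subtype
    rw [← Finset.set_biInter_coe, ← Finset.set_biInter_coe, Set.biInter_eq_iInter,
      Set.biInter_eq_iInter]
    exact EventuallyEq.countable_iInter fun i => (h1 i.1).symm
  rw [measure_congr h2, hf S H]
  exact Finset.prod_congr rfl fun i _ => measure_congr (h1 i)

lemma aux_integral_mul {Ω : Type*} [MeasurableSpace Ω] {μ : Measure Ω} [IsProbabilityMeasure μ]
    {f g : Ω → ℂ} (h : IndepFun f g μ) (hf : AEMeasurable f μ) (hg : AEMeasurable g μ) :
    ∫ ω, f ω * g ω ∂μ = (∫ ω, f ω ∂μ) * ∫ ω, g ω ∂μ := by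
  rw [indepFun_iff_map_prod_eq_prod_map_map hf hg] at h
  have h1 : ∫ ω, f ω * g ω ∂μ = ∫ p : ℂ × ℂ, p.1 * p.2 ∂(μ.map fun ω => (f ω, g ω)) :=
    (integral_map (hf.prodMk hg)
      (measurable_fst.mul measurable_snd).aestronglyMeasurable).symm
  have h2 : ∫ x : ℂ, x ∂(μ.map f) = ∫ ω, f ω ∂μ := integral_map hf aestronglyMeasurable_id
  have h3 : ∫ x : ℂ, x ∂(μ.map g) = ∫ ω, g ω ∂μ := integral_map hg aestronglyMeasurable_id
  rw [h1, h, integral_prod_mul (fun x : ℂ => x) (fun y : ℂ => y), h2, h3]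

lemma aux_mul_mem {Ω : Type*} [MeasurableSpace Ω] {μ : Measure Ω} {f g : Ω → ℂ}
    (hf : MemLp f ⊤ μ) (hg : MemLp g ⊤ μ) : MemLp (fun ω => f ω * g ω) ⊤ μ :=
  MemLp.mul' (r := ⊤) hg hf

lemma aux_conj_mem {Ω : Type*} [MeasurableSpace Ω] {μ : Measure Ω} {f : Ω → ℂ}
    (hf : MemLp f ⊤ μ) : MemLp (fun ω => (starRingEnd ℂ) (f ω)) ⊤ μ :=
  MemLp.of_le hf (Complex.continuous_conj.comp_aestronglyMeasurable hf.1)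
    (Eventually.of_forall fun ω => by simp)

/-- The total Case II contribution in the proof of Theorem 1, combining
equations (30) through (36). -/
theorem frp_caseII_total
    {Ω : Type*} [MeasurableSpace Ω] (μ : MeasureTheory.Measure Ω) [MeasureTheory.IsProbabilityMeasure μ]
    (M : ℤ) (hM : 1 ≤ M)
    (W : Finset ℤ) (hW : W = (Finset.Icc (-M) M).erase 0)
    (X Y : ℤ → Ω → ℂ)
    (hXbd : ∀ n ∈ W, MeasureTheory.MemLp (X n) ⊤ μ)
    (hYbd : ∀ n ∈ Finset.Icc (-M) M, MeasureTheory.MemLp (Y n) ⊤ μ)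
    (hindep : ProbabilityTheory.iIndepFun
      (Sum.elim (fun n : {n : ℤ // n ∈ W} => X n.1)
                (fun n : {n : ℤ // n ∈ Finset.Icc (-M) M} => Y n.1)) μ)
    (hXmean : ∀ n ∈ W, ∫ ω, X n ω ∂μ = 0)
    (hYmean : ∀ n ∈ Finset.Icc (-M) M, ∫ ω, Y n ω ∂μ = 0)
    (s : ℂ)
    (hX2 : ∀ n ∈ W, ∫ ω, ‖X n ω‖ ^ 2 ∂μ = 1)
    (hY2 : ∀ n ∈ Finset.Icc (-M) M, ∫ ω, ‖Y n ω‖ ^ 2 ∂μ = 1)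
    (ψ : ℂ) (hXsq : ∀ n ∈ W, ∫ ω, (X n ω) ^ 2 ∂μ = ψ)
    (S : ℤ → ℤ → ℤ → ℂ) :
    (∑ l ∈ W, ∑ m ∈ W,
        (∫ ω, ((starRingEnd ℂ) s * X l ω + (starRingEnd ℂ) (Y 0 ω) * Y l ω) * X m ω ∂μ) * S 0 l m)
      + (∑ k ∈ W, ∑ m ∈ W,
        (∫ ω, ((starRingEnd ℂ) (X k ω) * s + (starRingEnd ℂ) (Y k ω) * Y 0 ω) * X m ω ∂μ) * S k 0 m)
      + (∑ k ∈ W, ∑ l ∈ W,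
        (∫ ω, ((starRingEnd ℂ) (X k ω) * X l ω + (starRingEnd ℂ) (Y k ω) * Y l ω) * s ∂μ) * S k l 0)
      = ∑ k ∈ W, (s * (2 * S k k 0 + S k 0 k) + (starRingEnd ℂ) s * ψ * S 0 k k) := by
  classical
  have h0I : (0 : ℤ) ∈ Finset.Icc (-M) M := by
    rw [Finset.mem_Icc]; constructor <;> linarith
  have hWsub : ∀ n ∈ W, n ∈ Finset.Icc (-M) M := by
    intro n hn; rw [hW] at hn; exact Finset.mem_of_mem_erase hn
  have hbd : ∀ i : {n : ℤ // n ∈ W} ⊕ {n : ℤ // n ∈ Finset.Icc (-M) M},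
      MemLp (Sum.elim (fun n : {n : ℤ // n ∈ W} => X n.1)
        (fun n : {n : ℤ // n ∈ Finset.Icc (-M) M} => Y n.1) i) ⊤ μ := by
    rintro (⟨n, hn⟩ | ⟨n, hn⟩)
    · exact hXbd n hn
    · exact hYbd n hn
  set F := Sum.elim (fun n : {n : ℤ // n ∈ W} => X n.1)
      (fun n : {n : ℤ // n ∈ Finset.Icc (-M) M} => Y n.1) with hF
  have hasm : ∀ i, AEStronglyMeasurable (F i) μ := fun i => (hbd i).1
  set G := fun i => (hasm i).mk (F i) with hG
  have hgm : ∀ i, Measurable (G i) := fun i => (hasm i).stronglyMeasurable_mk.measurable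
  have haeFG : ∀ i, F i =ᵐ[μ] G i := fun i => (hasm i).ae_eq_mk
  have hindep' : ProbabilityTheory.iIndepFun G μ :=
    aux_iIndepFun_ae_eq hindep haeFG
  set X' : ℤ → Ω → ℂ := fun n => if h : n ∈ W then G (Sum.inl ⟨n, h⟩) else 0 with hX'
  set Y' : ℤ → Ω → ℂ := fun n =>
    if h : n ∈ Finset.Icc (-M) M then G (Sum.inr ⟨n, h⟩) else 0 with hY'
  have hX'eq : ∀ (n) (hn : n ∈ W), X' n = G (Sum.inl ⟨n, hn⟩) := fun n hn => dif_pos hn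
  have hY'eq : ∀ (n) (hn : n ∈ Finset.Icc (-M) M), Y' n = G (Sum.inr ⟨n, hn⟩) :=
    fun n hn => dif_pos hn
  have hXae : ∀ n ∈ W, X n =ᵐ[μ] X' n := fun n hn => by
    rw [hX'eq n hn]; exact haeFG (Sum.inl ⟨n, hn⟩)
  have hYae : ∀ n ∈ Finset.Icc (-M) M, Y n =ᵐ[μ] Y' n := fun n hn => by
    rw [hY'eq n hn]; exact haeFG (Sum.inr ⟨n, hn⟩)
  have hX'meas : ∀ n, Measurable (X' n) := by
    intro n
    by_cases h : n ∈ W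
    · rw [hX'eq n h]; exact hgm _
    · have : X' n = 0 := dif_neg h
      rw [this]; exact measurable_const
  have hY'meas : ∀ n, Measurable (Y' n) := by
    intro n
    by_cases h : n ∈ Finset.Icc (-M) M
    · rw [hY'eq n h]; exact hgm _
    · have : Y' n = 0 := dif_neg h
      rw [this]; exact measurable_const
  have hX'bd : ∀ n ∈ W, MemLp (X' n) ⊤ μ := fun n hn => (hXbd n hn).ae_eq (hXae n hn)
  have hY'bd : ∀ n ∈ Finset.Icc (-M) M, MemLp (Y' n) ⊤ μ :=
    fun n hn => (hYbd n hn).ae_eq (hYae n hn)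
  have hX'mean : ∀ n ∈ W, ∫ ω, X' n ω ∂μ = 0 := fun n hn =>
    (integral_congr_ae (hXae n hn)).symm.trans (hXmean n hn)
  -- independence facts
  have hIXX : ∀ k ∈ W, ∀ m ∈ W, k ≠ m → ProbabilityTheory.IndepFun (X' k) (X' m) μ := by
    intro k hk m hm hkm
    rw [hX'eq k hk, hX'eq m hm]
    exact hindep'.indepFun (by simpa using hkm)
  have hIYY : ∀ k ∈ Finset.Icc (-M) M, ∀ l ∈ Finset.Icc (-M) M, k ≠ l →
      ProbabilityTheory.IndepFun (Y' k) (Y' l) μ := by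
    intro k hk l hl hkl
    rw [hY'eq k hk, hY'eq l hl]
    exact hindep'.indepFun (by simpa using hkl)
  have hIYYX : ∀ a ∈ Finset.Icc (-M) M, ∀ b ∈ Finset.Icc (-M) M, ∀ m ∈ W,
      ProbabilityTheory.IndepFun (fun ω => (starRingEnd ℂ) (Y' a ω) * Y' b ω) (X' m) μ := by
    intro a ha b hb m hm
    rw [hX'eq m hm, hY'eq a ha, hY'eq b hb]
    have h1 := hindep'.indepFun_prodMk hgm (Sum.inr ⟨a, ha⟩) (Sum.inr ⟨b, hb⟩)
      (Sum.inl ⟨m, hm⟩) (by simp) (by simp)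
    exact h1.comp ((Complex.continuous_conj.measurable.comp measurable_fst).mul
      measurable_snd) measurable_id
  -- key integral values
  have E1 : ∀ l ∈ W, ∀ m ∈ W, ∫ ω, X' l ω * X' m ω ∂μ = if l = m then ψ else 0 := by
    intro l hl m hm
    by_cases h : l = m
    · subst h
      rw [if_pos rfl]
      have he : (fun ω => X' l ω * X' l ω) =ᵐ[μ] fun ω => X l ω ^ 2 := by
        filter_upwards [hXae l hl] with ω hω
        rw [← hω, sq]
      rw [integral_congr_ae he]
      exact hXsq l hl
    · rw [if_neg h,
        aux_integral_mul (hIXX l hl m hm h) (hX'meas l).aemeasurable (hX'meas m).aemeasurable,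
        hX'mean l hl, zero_mul]
  have E2 : ∀ k ∈ W, ∀ m ∈ W,
      ∫ ω, (starRingEnd ℂ) (X' k ω) * X' m ω ∂μ = if k = m then 1 else 0 := by
    intro k hk m hm
    by_cases h : k = m
    · subst h
      rw [if_pos rfl]
      have he : (fun ω => (starRingEnd ℂ) (X' k ω) * X' k ω)
          =ᵐ[μ] fun ω => ((‖X k ω‖ ^ 2 : ℝ) : ℂ) := by
        filter_upwards [hXae k hk] with ω hω
        rw [← hω, mul_comm, Complex.mul_conj, Complex.normSq_eq_norm_sq]
      have hco : ∫ a, ((‖X k a‖ ^ 2 : ℝ) : ℂ) ∂μ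
          = ((∫ a, ‖X k a‖ ^ 2 ∂μ : ℝ) : ℂ) := integral_ofReal
      rw [integral_congr_ae he, hco, hX2 k hk, Complex.ofReal_one]
    · have hI : ProbabilityTheory.IndepFun (fun ω => (starRingEnd ℂ) (X' k ω)) (X' m) μ :=
        (hIXX k hk m hm h).comp Complex.continuous_conj.measurable measurable_id
      rw [if_neg h,
        aux_integral_mul hI
          (Complex.continuous_conj.measurable.comp (hX'meas k)).aemeasurable
          (hX'meas m).aemeasurable,
        integral_conj, hX'mean k hk, map_zero, zero_mul]
  have E3 : ∀ k ∈ Finset.Icc (-M) M, ∀ l ∈ Finset.Icc (-M) M,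
      ∫ ω, (starRingEnd ℂ) (Y' k ω) * Y' l ω ∂μ = if k = l then 1 else 0 := by
    intro k hk l hl
    by_cases h : k = l
    · subst h
      rw [if_pos rfl]
      have he : (fun ω => (starRingEnd ℂ) (Y' k ω) * Y' k ω)
          =ᵐ[μ] fun ω => ((‖Y k ω‖ ^ 2 : ℝ) : ℂ) := by
        filter_upwards [hYae k hk] with ω hω
        rw [← hω, mul_comm, Complex.mul_conj, Complex.normSq_eq_norm_sq]
      have hco : ∫ a, ((‖Y k a‖ ^ 2 : ℝ) : ℂ) ∂μ
          = ((∫ a, ‖Y k a‖ ^ 2 ∂μ : ℝ) : ℂ) := integral_ofReal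
      rw [integral_congr_ae he, hco, hY2 k hk, Complex.ofReal_one]
    · have hY'mean : ∫ ω, Y' l ω ∂μ = 0 :=
        (integral_congr_ae (hYae l hl)).symm.trans (hYmean l hl)
      have hI : ProbabilityTheory.IndepFun (fun ω => (starRingEnd ℂ) (Y' k ω)) (Y' l) μ :=
        (hIYY k hk l hl h).comp Complex.continuous_conj.measurable measurable_id
      rw [if_neg h,
        aux_integral_mul hI
          (Complex.continuous_conj.measurable.comp (hY'meas k)).aemeasurable
          (hY'meas l).aemeasurable,
        hY'mean, mul_zero]
  have E4 : ∀ a ∈ Finset.Icc (-M) M, ∀ b ∈ Finset.Icc (-M) M, ∀ m ∈ W,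
      ∫ ω, ((starRingEnd ℂ) (Y' a ω) * Y' b ω) * X' m ω ∂μ = 0 := by
    intro a ha b hb m hm
    rw [aux_integral_mul (hIYYX a ha b hb m hm)
        ((Complex.continuous_conj.measurable.comp (hY'meas a)).mul (hY'meas b)).aemeasurable
        (hX'meas m).aemeasurable,
      hX'mean m hm, mul_zero]
  -- integrability
  have intXX : ∀ k ∈ W, ∀ m ∈ W, Integrable (fun ω => X' k ω * X' m ω) μ := fun k hk m hm =>
    (aux_mul_mem (hX'bd k hk) (hX'bd m hm)).integrable le_top
  have intCXX : ∀ k ∈ W, ∀ m ∈ W,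
      Integrable (fun ω => (starRingEnd ℂ) (X' k ω) * X' m ω) μ := fun k hk m hm =>
    (aux_mul_mem (aux_conj_mem (hX'bd k hk)) (hX'bd m hm)).integrable le_top
  have intCYY : ∀ a ∈ Finset.Icc (-M) M, ∀ b ∈ Finset.Icc (-M) M,
      Integrable (fun ω => (starRingEnd ℂ) (Y' a ω) * Y' b ω) μ := fun a ha b hb =>
    (aux_mul_mem (aux_conj_mem (hY'bd a ha)) (hY'bd b hb)).integrable le_top
  have intCYYX : ∀ a ∈ Finset.Icc (-M) M, ∀ b ∈ Finset.Icc (-M) M, ∀ m ∈ W,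
      Integrable (fun ω => ((starRingEnd ℂ) (Y' a ω) * Y' b ω) * X' m ω) μ := fun a ha b hb m hm =>
    (aux_mul_mem (aux_mul_mem (aux_conj_mem (hY'bd a ha)) (hY'bd b hb)) (hX'bd m hm)).integrable
      le_top
  -- summand computations
  have T1 : ∀ l ∈ W, ∀ m ∈ W,
      ∫ ω, ((starRingEnd ℂ) s * X l ω + (starRingEnd ℂ) (Y 0 ω) * Y l ω) * X m ω ∂μ
        = if l = m then (starRingEnd ℂ) s * ψ else 0 := by
    intro l hl m hm
    have he : (fun ω => ((starRingEnd ℂ) s * X l ω + (starRingEnd ℂ) (Y 0 ω) * Y l ω) * X m ω)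
        =ᵐ[μ] fun ω => (starRingEnd ℂ) s * (X' l ω * X' m ω)
          + ((starRingEnd ℂ) (Y' 0 ω) * Y' l ω) * X' m ω := by
      filter_upwards [hXae l hl, hXae m hm, hYae 0 h0I, hYae l (hWsub l hl)] with ω e1 e2 e3 e4
      rw [← e1, ← e2, ← e3, ← e4]; ring
    rw [integral_congr_ae he,
      integral_add ((intXX l hl m hm).const_mul _) (intCYYX 0 h0I l (hWsub l hl) m hm),
      integral_const_mul, E1 l hl m hm, E4 0 h0I l (hWsub l hl) m hm, add_zero]
    by_cases h : l = m <;> simp [h]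
  have T2 : ∀ k ∈ W, ∀ m ∈ W,
      ∫ ω, ((starRingEnd ℂ) (X k ω) * s + (starRingEnd ℂ) (Y k ω) * Y 0 ω) * X m ω ∂μ
        = if k = m then s else 0 := by
    intro k hk m hm
    have he : (fun ω => ((starRingEnd ℂ) (X k ω) * s + (starRingEnd ℂ) (Y k ω) * Y 0 ω) * X m ω)
        =ᵐ[μ] fun ω => s * ((starRingEnd ℂ) (X' k ω) * X' m ω)
          + ((starRingEnd ℂ) (Y' k ω) * Y' 0 ω) * X' m ω := by
      filter_upwards [hXae k hk, hXae m hm, hYae 0 h0I, hYae k (hWsub k hk)] with ω e1 e2 e3 e4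
      rw [← e1, ← e2, ← e3, ← e4]; ring
    rw [integral_congr_ae he,
      integral_add ((intCXX k hk m hm).const_mul _) (intCYYX k (hWsub k hk) 0 h0I m hm),
      integral_const_mul, E2 k hk m hm, E4 k (hWsub k hk) 0 h0I m hm, add_zero]
    by_cases h : k = m <;> simp [h]
  have T3 : ∀ k ∈ W, ∀ l ∈ W,
      ∫ ω, ((starRingEnd ℂ) (X k ω) * X l ω + (starRingEnd ℂ) (Y k ω) * Y l ω) * s ∂μ
        = if k = l then s * 2 else 0 := by
    intro k hk l hl
    have he : (fun ω => ((starRingEnd ℂ) (X k ω) * X l ω + (starRingEnd ℂ) (Y k ω) * Y l ω) * s)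
        =ᵐ[μ] fun ω => s * ((starRingEnd ℂ) (X' k ω) * X' l ω)
          + s * ((starRingEnd ℂ) (Y' k ω) * Y' l ω) := by
      filter_upwards [hXae k hk, hXae l hl, hYae k (hWsub k hk), hYae l (hWsub l hl)]
        with ω e1 e2 e3 e4
      rw [← e1, ← e2, ← e3, ← e4]; ring
    rw [integral_congr_ae he,
      integral_add ((intCXX k hk l hl).const_mul _)
        ((intCYY k (hWsub k hk) l (hWsub l hl)).const_mul _),
      integral_const_mul, integral_const_mul, E2 k hk l hl,
      E3 k (hWsub k hk) l (hWsub l hl)]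
    by_cases h : k = l <;> simp [h] <;> ring
  -- assemble
  have S1 : ∀ l ∈ W,
      ∑ m ∈ W, (∫ ω, ((starRingEnd ℂ) s * X l ω + (starRingEnd ℂ) (Y 0 ω) * Y l ω) * X m ω ∂μ)
        * S 0 l m = (starRingEnd ℂ) s * ψ * S 0 l l := by
    intro l hl
    have h1 : ∀ m ∈ W,
        (∫ ω, ((starRingEnd ℂ) s * X l ω + (starRingEnd ℂ) (Y 0 ω) * Y l ω) * X m ω ∂μ) * S 0 l m
          = if l = m then (starRingEnd ℂ) s * ψ * S 0 l m else 0 := by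
      intro m hm; rw [T1 l hl m hm]; by_cases h : l = m <;> simp [h]
    rw [Finset.sum_congr rfl h1, Finset.sum_ite_eq W l fun m => (starRingEnd ℂ) s * ψ * S 0 l m,
      if_pos hl]
  have S2 : ∀ k ∈ W,
      ∑ m ∈ W, (∫ ω, ((starRingEnd ℂ) (X k ω) * s + (starRingEnd ℂ) (Y k ω) * Y 0 ω) * X m ω ∂μ)
        * S k 0 m = s * S k 0 k := by
    intro k hk
    have h1 : ∀ m ∈ W,
        (∫ ω, ((starRingEnd ℂ) (X k ω) * s + (starRingEnd ℂ) (Y k ω) * Y 0 ω) * X m ω ∂μ) * S k 0 m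
          = if k = m then s * S k 0 m else 0 := by
      intro m hm; rw [T2 k hk m hm]; by_cases h : k = m <;> simp [h]
    rw [Finset.sum_congr rfl h1, Finset.sum_ite_eq W k fun m => s * S k 0 m, if_pos hk]
  have S3 : ∀ k ∈ W,
      ∑ l ∈ W, (∫ ω, ((starRingEnd ℂ) (X k ω) * X l ω + (starRingEnd ℂ) (Y k ω) * Y l ω) * s ∂μ)
        * S k l 0 = s * 2 * S k k 0 := by
    intro k hk
    have h1 : ∀ l ∈ W,
        (∫ ω, ((starRingEnd ℂ) (X k ω) * X l ω + (starRingEnd ℂ) (Y k ω) * Y l ω) * s ∂μ) * S k l 0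
          = if k = l then s * 2 * S k l 0 else 0 := by
      intro l hl; rw [T3 k hk l hl]; by_cases h : k = l <;> simp [h]
    rw [Finset.sum_congr rfl h1, Finset.sum_ite_eq W k fun l => s * 2 * S k l 0, if_pos hk]
  rw [Finset.sum_congr rfl S1, Finset.sum_congr rfl S2, Finset.sum_congr rfl S3,
    ← Finset.sum_add_distrib, ← Finset.sum_add_distrib]
  exact Finset.sum_congr rfl fun k _ => by ring
end

section
/- Fix ŝ ∈ ℂ^L and α > 0, let u = Tᴴ·( a + c·(T ŝ) − r ), and assume u_j ≠ 0 for every component j. Let g ∈ ℂ^L denote the gradient of f at ŝ with respect to the real inner product Re⟪·,·⟫ on ℂ^L. Then g_j ≠ 0 for every j, and the normalized gradient descent update satisfies, componentwise, ŝ_j − α·g_j/|g_j| = ŝ_j + i·α·u_j/|u_j| for every j; that is, ŝ − α·g ⊘ |g| = ŝ + i·α·u ⊘ |u|, where ⊘ denotes element-wise division and |·| the element-wise complex absolute value. -/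
/-- Reinterpret a plain tuple of complex numbers as an element of the
Euclidean (ℓ²) space, so that matrix-vector products land in the right space. -/
noncomputable def toEuc {n : ℕ} (x : Fin n → ℂ) : EuclideanSpace ℂ (Fin n) :=
  (WithLp.equiv 2 (Fin n → ℂ)).symm x

set_option maxHeartbeats 1000000

private lemma grad_eq
    (B L : ℕ) (hB : 0 < B)
    (T : Matrix (Fin B) (Fin L) ℂ)
    (a r : EuclideanSpace ℂ (Fin B))
    (c : ℂ)
    (f : EuclideanSpace ℂ (Fin L) → ℝ)
    (hf : ∀ shat : EuclideanSpace ℂ (Fin L),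
      f shat = (1 / (2 * (B : ℝ))) * ‖a + c • toEuc (T.mulVec shat) - r‖ ^ 2)
    (shat : EuclideanSpace ℂ (Fin L))
    (u : EuclideanSpace ℂ (Fin L))
    (hu : u = toEuc (T.conjTranspose.mulVec (a + c • toEuc (T.mulVec shat) - r)))
    (g : EuclideanSpace ℂ (Fin L))
    (hg : ∀ v : EuclideanSpace ℂ (Fin L), fderiv ℝ f shat v = (inner ℂ g v : ℂ).re) :
    g = ((starRingEnd ℂ c) / B) • u := by
  set M : EuclideanSpace ℂ (Fin L) →L[ℝ] EuclideanSpace ℂ (Fin B) :=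
    LinearMap.toContinuousLinearMap ((c • Matrix.toEuclideanLin T).restrictScalars ℝ) with hM
  have hMv : ∀ v, M v = c • toEuc (T.mulVec v) := by
    intro v
    rw [hM]
    rw [LinearMap.coe_toContinuousLinearMap']
    rfl
  set F : EuclideanSpace ℂ (Fin L) → EuclideanSpace ℂ (Fin B) := fun s => a + M s - r with hF
  have hFd : HasFDerivAt F M shat := ((M.hasFDerivAt).const_add a).sub_const r
  have hIn : HasFDerivAt (fun s => (inner ℝ (F s) (F s) : ℝ))
      ((fderivInnerCLM ℝ (F shat, F shat)).comp (M.prod M)) shat := hFd.inner ℝ hFd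
  have hfe : f = fun s => (1 / (2 * (B : ℝ))) * (inner ℝ (F s) (F s) : ℝ) := by
    funext s
    rw [hf s, real_inner_self_eq_norm_sq]
    simp [hF, hMv]
  have hfd : HasFDerivAt f ((1 / (2 * (B : ℝ))) •
      ((fderivInnerCLM ℝ (F shat, F shat)).comp (M.prod M))) shat := by
    rw [hfe]; exact hIn.const_mul _
  have hfderiv : ∀ v, fderiv ℝ f shat v = (1 / (B : ℝ)) * (inner ℝ (F shat) (M v) : ℝ) := by
    intro v
    rw [hfd.fderiv]
    simp only [ContinuousLinearMap.coe_smul', Pi.smul_apply, ContinuousLinearMap.coe_comp',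
      Function.comp_apply, ContinuousLinearMap.prod_apply, fderivInnerCLM_apply]
    rw [real_inner_comm (M v) (F shat), smul_eq_mul]
    push_cast
    ring
  -- key adjoint identity
  have key : ∀ v, (inner ℂ (F shat) (M v) : ℂ) = c * (inner ℂ u v : ℂ) := by
    intro v
    have h1 : M v = c • (Matrix.toEuclideanLin T v) := by
      rw [hM, LinearMap.coe_toContinuousLinearMap']
      rfl
    rw [h1, inner_smul_right]
    congr 1
    have h2 : (inner ℂ (F shat) (Matrix.toEuclideanLin T v) : ℂ)
        = inner ℂ (LinearMap.adjoint (Matrix.toEuclideanLin T) (F shat)) v :=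
      (LinearMap.adjoint_inner_left _ _ _).symm
    rw [h2, ← Matrix.toEuclideanLin_conjTranspose_eq_adjoint]
    congr 1
    rw [hu]
    rfl
  have hreal : ∀ v : EuclideanSpace ℂ (Fin L),
      (inner ℝ (F shat) (M v) : ℝ) = (inner ℂ (F shat) (M v) : ℂ).re := by
    intro v
    have h := real_inner_eq_re_inner ℂ (F shat) (M v)
    rw [PiLp.inner_apply, PiLp.inner_apply, Complex.re_sum]
    refine Finset.sum_congr rfl fun i _ => ?_
    simp [Complex.inner, RCLike.inner_apply, mul_comm]
  set w : EuclideanSpace ℂ (Fin L) := ((starRingEnd ℂ c) / B) • u with hw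
  have hgw : ∀ v, (inner ℂ (g - w) v : ℂ).re = 0 := by
    intro v
    rw [inner_sub_left]
    have hwv : (inner ℂ w v : ℂ) = (c / B) * inner ℂ u v := by
      rw [hw, inner_smul_left]
      congr 1
      simp [map_div₀]
    have := hg v
    rw [hfderiv v, hreal v, key v] at this
    rw [Complex.sub_re, hwv, ← this]
    have h2 : (c / B * inner ℂ u v : ℂ) = (c * inner ℂ u v) / ((B : ℝ) : ℂ) := by
      push_cast; ring
    rw [h2, Complex.div_ofReal_re]
    ring
  have : g - w = 0 := by
    have h0 := hgw (g - w)
    have h1 : ((inner ℂ (g - w) (g - w) : ℂ)).re = ‖g - w‖ ^ 2 := by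
      have h := inner_self_eq_norm_sq (𝕜 := ℂ) (g - w)
      rw [← h]
      rfl
    rw [h0] at h1
    have h2 : ‖g - w‖ = 0 := by nlinarith [norm_nonneg (g - w)]
    simpa using h2
  exact sub_eq_zero.mp this



/-- Theorem 2 of the paper: the normalized batch gradient descent (NBGD) step for
the batch MSE objective, equation (25).  With u = Tᴴ(a + c·Tŝ − r) componentwise
nonzero and g the gradient of f at ŝ with respect to the real inner product
Re⟪·,·⟫, every component of g is nonzero and the normalized gradient descent
update satisfies ŝⱼ − α·gⱼ/|gⱼ| = ŝⱼ + i·α·uⱼ/|uⱼ|. -/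
theorem nbgd_descent_step
    (B L : ℕ) (hB : 0 < B) (hL : 0 < L)
    (T : Matrix (Fin B) (Fin L) ℂ)
    (a r : EuclideanSpace ℂ (Fin B))
    (γ Es : ℝ) (hγ : 0 < γ) (hEs : 0 < Es)
    (c : ℂ) (hc : c = Complex.I * (8 / 9) * (γ : ℂ) * (Es : ℂ))
    (f : EuclideanSpace ℂ (Fin L) → ℝ)
    (hf : ∀ shat : EuclideanSpace ℂ (Fin L),
      f shat = (1 / (2 * (B : ℝ))) * ‖a + c • toEuc (T.mulVec shat) - r‖ ^ 2)
    (shat : EuclideanSpace ℂ (Fin L))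
    (α : ℝ) (hα : 0 < α)
    (u : EuclideanSpace ℂ (Fin L))
    (hu : u = toEuc (T.conjTranspose.mulVec (a + c • toEuc (T.mulVec shat) - r)))
    (hunz : ∀ j : Fin L, u j ≠ 0)
    (g : EuclideanSpace ℂ (Fin L))
    (hg : ∀ v : EuclideanSpace ℂ (Fin L), fderiv ℝ f shat v = (inner ℂ g v : ℂ).re) :
    ∀ j : Fin L, g j ≠ 0 ∧
      shat j - (α : ℂ) * (g j / (‖g j‖ : ℂ))
        = shat j + Complex.I * (α : ℂ) * (u j / (‖u j‖ : ℂ)) := by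
  have hgw : g = ((starRingEnd ℂ c) / B) • u :=
    grad_eq B L hB T a r c f hf shat u hu g hg
  set k : ℝ := 8 / 9 * γ * Es with hkdef
  have hk : 0 < k := by positivity
  have hcI : c = Complex.I * (k : ℂ) := by rw [hc, hkdef]; push_cast; ring
  have hcc : starRingEnd ℂ c = -Complex.I * (k : ℂ) := by
    rw [hcI, map_mul, Complex.conj_I, Complex.conj_ofReal]
  have hBR : (0 : ℝ) < (B : ℝ) := by exact_mod_cast hB
  intro j
  have hgj : g j = ((starRingEnd ℂ c) / B) * u j := by rw [hgw]; rfl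
  have hu0 : ‖u j‖ ≠ 0 := by
    simpa [map_ne_zero] using hunz j
  have habsc : ‖starRingEnd ℂ c / (B : ℂ)‖ = k / B := by
    rw [hcc, norm_div, norm_mul]
    simp [Complex.norm_real, abs_of_pos hk, Complex.norm_natCast]
  have habs : ‖g j‖ = k / B * ‖u j‖ := by
    rw [hgj, norm_mul, habsc]
  have habs0 : ‖g j‖ ≠ 0 := by
    rw [habs]
    exact mul_ne_zero (by positivity) hu0
  refine ⟨fun h => habs0 (by simp [h]), ?_⟩
  rw [habs, hgj, hcc]
  have hkC : ((k : ℝ) : ℂ) ≠ 0 := by exact_mod_cast hk.ne'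
  have hBC : ((B : ℕ) : ℂ) ≠ 0 := by exact_mod_cast hB.ne'
  have huC : ((‖u j‖ : ℝ) : ℂ) ≠ 0 := by exact_mod_cast hu0
  push_cast
  field_simp
  ring
end
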